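/- Every factor ω of the period-doubling sequence D occurs exactly once in its envelope Env(ω); that is, there is exactly one position at which ω occurs in the word Env(ω). -/

import Mathlib

/-- The alphabet: letters a, b (for the period-doubling sequence) and c (used by Θ₂). -/
inductive Letter : Type
  | a | b | c
deriving DecidableEq, Repr

open Letter

/-- The period-doubling substitution σ : a ↦ ab, b ↦ aa, extended to words
(the extra letter c is left untouched; it is never produced). -/
def sigmaw : List Letter → List Letter :=
  fun w => w.flatMap fun x => match x with
    | .a => [.a, .b]
    | .b => [.a, .a]
    | .c => [.c]

/-- A_m = σ^m(a). -/
def A (m : ℕ) : List Letter := sigmaw^[m] [.a]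

/-- B_m = σ^m(b). -/
def B (m : ℕ) : List Letter := sigmaw^[m] [.b]

/-- δ_m, the last letter of A_m. -/
def delta (m : ℕ) : Letter := (A m).getLastD .a

/-- The period-doubling sequence D, as a function giving its (n+1)-st letter
(0-indexed); it is the fixed point of σ beginning with a, and A_{n+1} is a
prefix of it of length 2^{n+1} > n. -/
def D (n : ℕ) : Letter := (A (n + 1)).getD n .a

/-- The finite segment D[i .. i+len−1] of the period-doubling sequence,
with 1-based starting position i. -/
def Dseg (i len : ℕ) : List Letter := (List.range len).map fun k => D (i - 1 + k)

/-- u occurs in the finite word w at (1-based) position i. -/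
def OccursAt {α : Type*} (u w : List α) (i : ℕ) : Prop :=
  1 ≤ i ∧ i - 1 + u.length ≤ w.length ∧ (w.drop (i - 1)).take u.length = u

/-- u is a factor of the finite word w. -/
def IsFactor {α : Type*} (u w : List α) : Prop := ∃ i, OccursAt u w i

/-- u occurs in the period-doubling sequence D at (1-based) position i. -/
def DOccursAt (u : List Letter) (i : ℕ) : Prop := 1 ≤ i ∧ Dseg i u.length = u

/-- u is a factor of the period-doubling sequence D. -/
def FactorD (u : List Letter) : Prop := ∃ i, DOccursAt u i

/-- L(u,p): the starting position of the p-th occurrence (p ≥ 1) of u in D. -/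
noncomputable def L (u : List Letter) (p : ℕ) : ℕ := Nat.nth (DOccursAt u) (p - 1)

/-- r_p(u): the p-th return word of u (p ≥ 1), i.e. D[L(u,p) .. L(u,p+1)−1];
r_0(u) is the prefix of D preceding the first occurrence of u. -/
noncomputable def r (u : List Letter) (p : ℕ) : List Letter :=
  if p = 0 then Dseg 1 (L u 1 - 1) else Dseg (L u p) (L u (p + 1) - L u p)

/-- The morphism τ₁ : a ↦ a, b ↦ bb, extended to words. -/
def tau1 : List Letter → List Letter :=
  fun w => w.flatMap fun x => match x with
    | .a => [.a]
    | .b => [.b, .b]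
    | .c => [.c]

/-- The morphism τ₂ : a ↦ ab, b ↦ acac, extended to words. -/
def tau2 : List Letter → List Letter :=
  fun w => w.flatMap fun x => match x with
    | .a => [.a, .b]
    | .b => [.a, .c, .a, .c]
    | .c => [.c]

/-- Θ₁[p], the p-th letter (p ≥ 1) of Θ₁ = τ₁(D): since |τ₁(w)| ≥ |w|, the p-th
letter of Θ₁ is the p-th letter of the image of the length-p prefix of D. -/
def Theta1 (p : ℕ) : Letter := (tau1 (Dseg 1 p)).getD (p - 1) .a

/-- Θ₂[p], the p-th letter (p ≥ 1) of Θ₂ = τ₂(D). -/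
def Theta2 (p : ℕ) : Letter := (tau2 (Dseg 1 p)).getD (p - 1) .a

/-- The envelope word E_{1,m} = A_m with its last letter δ_m deleted. -/
def E1 (m : ℕ) : List Letter := (A m).dropLast

/-- The envelope word E_{2,m} = B_m B_{m−1} with its last letter δ_m deleted. -/
def E2 (m : ℕ) : List Letter := (B m ++ B (m - 1)).dropLast

/-- Enumeration of the envelope words in the order
E_{1,1} ⊏ E_{2,1} ⊏ E_{1,2} ⊏ E_{2,2} ⊏ …. -/
def Eword (k : ℕ) : List Letter := if k % 2 = 0 then E1 (k / 2 + 1) else E2 (k / 2 + 1)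

/-- Env(u): the ⊏-least envelope word having u as a factor. -/
noncomputable def Env (u : List Letter) : List Letter :=
  Eword (sInf {k | IsFactor u (Eword k)})

/-- The letterwise complement exchanging a and b. -/
def comp : Letter → Letter
  | .a => .b
  | .b => .a
  | .c => .c

open Letter

/-- 0-based occurrence predicate. -/
def Occ0 (u w : List Letter) (p : ℕ) : Prop :=
  p + u.length ≤ w.length ∧ (w.drop p).take u.length = u

instance (u w : List Letter) (p : ℕ) : Decidable (Occ0 u w p) := by
  unfold Occ0; infer_instance

lemma occ0_iff {u w : List Letter} {p : ℕ} :
    Occ0 u w p ↔ p + u.length ≤ w.length ∧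
      ∀ t < u.length, u.getD t .c = w.getD (p + t) .c := by
  constructor
  · rintro ⟨h1, h2⟩
    refine ⟨h1, fun t ht => ?_⟩
    rw [List.getD_eq_getElem u .c ht, List.getD_eq_getElem w .c (by omega)]
    rw [List.getElem_of_eq h2.symm ht]
    simp
  · rintro ⟨h1, h2⟩
    refine ⟨h1, ?_⟩
    apply List.ext_getElem
    · simp; omega
    · intro i hi1 hi2
      have hi : i < u.length := by simpa using hi2
      have := h2 i hi
      rw [List.getD_eq_getElem u .c hi, List.getD_eq_getElem w .c (by omega)] at this
      simp [this]

lemma occursAt_iff {u w : List Letter} {i : ℕ} :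
    OccursAt u w i ↔ 1 ≤ i ∧ Occ0 u w (i - 1) := by
  unfold OccursAt Occ0
  tauto

lemma comp_inj {x y : Letter} (h : comp x = comp y) : x = y := by
  cases x <;> cases y <;> simp_all [comp]

/-- "no letter c" predicate -/
def noc (w : List Letter) : Prop := ∀ x ∈ w, x ≠ .c

lemma sigmaw_cons (x : Letter) (w : List Letter) :
    sigmaw (x :: w) = (match x with | .a => [Letter.a, .b] | .b => [.a, .a] | .c => [.c]) ++ sigmaw w := by
  simp [sigmaw]

lemma sigmaw_append (x y : List Letter) : sigmaw (x ++ y) = sigmaw x ++ sigmaw y := by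
  simp [sigmaw]

lemma noc_sigmaw {w : List Letter} (h : noc w) : noc (sigmaw w) := by
  intro x hx
  simp only [sigmaw, List.mem_flatMap] at hx
  obtain ⟨y, hy, hx⟩ := hx
  have := h y hy
  cases y <;> simp_all <;> rcases hx with h | h <;> simp [h]

lemma length_sigmaw {w : List Letter} (h : noc w) : (sigmaw w).length = 2 * w.length := by
  induction w with
  | nil => rfl
  | cons x w ih =>
    have hx := h x (by simp)
    have hw : noc w := fun y hy => h y (by simp [hy])
    rw [sigmaw_cons]
    cases x <;> simp_all <;> omega

/-- V(w) = σ(w) ++ [a] -/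
def Vw (w : List Letter) : List Letter := sigmaw w ++ [.a]

lemma Vw_nil : Vw [] = [.a] := rfl

lemma Vw_cons {x : Letter} (w : List Letter) (hx : x ≠ .c) :
    Vw (x :: w) = .a :: comp x :: Vw w := by
  unfold Vw
  rw [sigmaw_cons]
  cases x <;> simp_all [comp]

lemma length_Vw {w : List Letter} (h : noc w) : (Vw w).length = 2 * w.length + 1 := by
  unfold Vw
  simp [length_sigmaw h]

lemma noc_Vw {w : List Letter} (h : noc w) : noc (Vw w) := by
  intro x hx
  unfold Vw at hx
  rcases List.mem_append.mp hx with h' | h'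
  · exact noc_sigmaw h x h'
  · simp at h'; simp [h']

lemma Vw_even {w : List Letter} (h : noc w) : ∀ t ≤ w.length, (Vw w).getD (2 * t) .c = .a := by
  induction w with
  | nil =>
    intro t ht
    have : t = 0 := by simpa using ht
    subst this
    rfl
  | cons x w ih =>
    intro t ht
    have hx := h x (by simp)
    have hw : noc w := fun y hy => h y (by simp [hy])
    rw [Vw_cons w hx]
    match t with
    | 0 => rfl
    | (s+1) =>
      have : 2 * (s + 1) = (2 * s) + 1 + 1 := by omega
      rw [this, List.getD_cons_succ, List.getD_cons_succ]
      exact ih hw s (by simpa using ht)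

lemma Vw_odd {w : List Letter} (h : noc w) :
    ∀ t < w.length, (Vw w).getD (2 * t + 1) .c = comp (w.getD t .c) := by
  induction w with
  | nil => intro t ht; simp at ht
  | cons x w ih =>
    intro t ht
    have hx := h x (by simp)
    have hw : noc w := fun y hy => h y (by simp [hy])
    rw [Vw_cons w hx]
    match t with
    | 0 => rfl
    | (s+1) =>
      have : 2 * (s + 1) + 1 = (2 * s + 1) + 1 + 1 := by omega
      rw [this, List.getD_cons_succ, List.getD_cons_succ, List.getD_cons_succ]
      exact ih hw s (by simpa using ht)

lemma getD_eq_c_of_ge {w : List Letter} {n : ℕ} (h : w.length ≤ n) : w.getD n .c = .c := by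
  exact List.getD_eq_default w .c h

lemma Vw_even_ne_b {w : List Letter} (h : noc w) {s : ℕ} (hs : s % 2 = 0) :
    (Vw w).getD s .c ≠ .b := by
  by_cases hrange : s < (Vw w).length
  · rw [length_Vw h] at hrange
    have : s = 2 * (s / 2) := by omega
    rw [this, Vw_even h (s / 2) (by omega)]
    simp
  · rw [getD_eq_c_of_ge (by omega)]
    simp

lemma iter_sigmaw_append (m : ℕ) (x y : List Letter) :
    sigmaw^[m] (x ++ y) = sigmaw^[m] x ++ sigmaw^[m] y := by
  induction m generalizing x y with
  | zero => rfl
  | succ m ih =>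
    rw [Function.iterate_succ_apply, Function.iterate_succ_apply,
      Function.iterate_succ_apply, sigmaw_append]
    exact ih _ _

lemma A_succ (m : ℕ) : A (m + 1) = A m ++ B m := by
  unfold A B
  rw [Function.iterate_succ_apply]
  have h1 : sigmaw [Letter.a] = [Letter.a] ++ [Letter.b] := rfl
  rw [h1, iter_sigmaw_append]

lemma B_succ (m : ℕ) : B (m + 1) = A m ++ A m := by
  unfold A B
  rw [Function.iterate_succ_apply]
  have h1 : sigmaw [Letter.b] = [Letter.a] ++ [Letter.a] := rfl
  rw [h1, iter_sigmaw_append]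

lemma A_succ' (m : ℕ) : A (m + 1) = sigmaw (A m) := Function.iterate_succ_apply' _ _ _

lemma B_succ' (m : ℕ) : B (m + 1) = sigmaw (B m) := Function.iterate_succ_apply' _ _ _

lemma noc_A (m : ℕ) : noc (A m) := by
  induction m with
  | zero => intro x hx; simp [A] at hx; simp [hx]
  | succ m ih => rw [A_succ']; exact noc_sigmaw ih

lemma noc_B (m : ℕ) : noc (B m) := by
  induction m with
  | zero => intro x hx; simp [B] at hx; simp [hx]
  | succ m ih => rw [B_succ']; exact noc_sigmaw ih

lemma length_A (m : ℕ) : (A m).length = 2 ^ m := by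
  induction m with
  | zero => rfl
  | succ m ih =>
    rw [A_succ', length_sigmaw (noc_A m), ih]
    ring

lemma length_B (m : ℕ) : (B m).length = 2 ^ m := by
  induction m with
  | zero => rfl
  | succ m ih =>
    rw [B_succ', length_sigmaw (noc_B m), ih]
    ring

lemma A_ne_nil (m : ℕ) : A m ≠ [] := by
  have := length_A m
  have hp : 0 < 2 ^ m := pow_pos (by norm_num) m
  intro h
  rw [h] at this
  simp at this
  omega

lemma sigmaw_dropLast {w : List Letter} (hw : w ≠ []) (h : noc w) :
    (sigmaw w).dropLast = Vw w.dropLast := by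
  have hx : w.getLast hw = .a ∨ w.getLast hw = .b := by
    cases h' : w.getLast hw
    · exact Or.inl rfl
    · exact Or.inr rfl
    · exact absurd h' (h _ (List.getLast_mem hw))
  conv_lhs => rw [← List.dropLast_append_getLast hw]
  rw [sigmaw_append]
  unfold Vw
  rcases hx with hx | hx <;> rw [hx] <;>
    rw [List.dropLast_append_of_ne_nil (by simp [sigmaw])] <;> rfl

lemma E1_succ (m : ℕ) : E1 (m + 1) = Vw (E1 m) := by
  unfold E1
  rw [A_succ', sigmaw_dropLast (A_ne_nil m) (noc_A m)]

lemma BB_ne_nil (m n : ℕ) : B m ++ B n ≠ [] := by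
  have := length_B m
  have hp : 0 < 2 ^ m := pow_pos (by norm_num) m
  intro h
  simp at h
  rw [h.1] at this
  simp at this
  omega

lemma noc_BB (m n : ℕ) : noc (B m ++ B n) := by
  intro x hx
  rcases List.mem_append.mp hx with h | h
  · exact noc_B m x h
  · exact noc_B n x h

lemma E2_succ (m : ℕ) : E2 (m + 2) = Vw (E2 (m + 1)) := by
  unfold E2
  have h1 : (m + 2 : ℕ) - 1 = m + 1 := by omega
  have h2 : (m + 1 : ℕ) - 1 = m := by omega
  rw [h1, h2]
  have h3 : B (m + 2) ++ B (m + 1) = sigmaw (B (m + 1) ++ B m) := by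
    rw [sigmaw_append, ← B_succ', ← B_succ']
  rw [h3, sigmaw_dropLast (BB_ne_nil _ _) (noc_BB _ _)]

lemma Eword_succ (k : ℕ) : Eword (k + 2) = Vw (Eword k) := by
  unfold Eword
  have hmod : (k + 2) % 2 = k % 2 := by omega
  have hdiv : (k + 2) / 2 = k / 2 + 1 := by omega
  rcases Nat.even_or_odd k with h | h
  · have h0 : k % 2 = 0 := Nat.even_iff.mp h
    rw [hmod, h0, if_pos rfl, if_pos rfl, hdiv]
    exact E1_succ _
  · have h0 : k % 2 = 1 := Nat.odd_iff.mp h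
    rw [hmod, h0, if_neg (by omega), if_neg (by omega), hdiv]
    exact E2_succ _

lemma Eword_zero : Eword 0 = [.a] := rfl

lemma Eword_one : Eword 1 = [.a, .a] := rfl

lemma noc_Eword (k : ℕ) : noc (Eword k) := by
  induction k using Nat.strong_induction_on with
  | _ k IH =>
    rcases k with _ | k
    · intro x hx; rw [Eword_zero] at hx; simp at hx; simp [hx]
    rcases k with _ | k
    · intro x hx; rw [Eword_one] at hx; simp at hx; simp [hx]
    · rw [Eword_succ]
      exact noc_Vw (IH k (by omega))

lemma Eword_even_ne_b (k : ℕ) {s : ℕ} (hs : s % 2 = 0) : (Eword k).getD s .c ≠ .b := by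
  rcases k with _ | k
  · rw [Eword_zero]
    match s, hs with
    | 0, _ => simp
    | (n+1), _ => rw [getD_eq_c_of_ge (by simp)]; simp
  rcases k with _ | k
  · rw [Eword_one]
    match s, hs with
    | 0, _ => simp
    | 1, h => simp at h
    | (n+2), _ => rw [getD_eq_c_of_ge (by simp)]; simp
  · rw [Eword_succ]
    exact Vw_even_ne_b (noc_Eword k) hs

lemma A_getD_succ (d : Letter) {m n : ℕ} (h : n < 2 ^ m) :
    (A (m + 1)).getD n d = (A m).getD n d := by
  rw [A_succ]
  exact List.getD_append _ _ _ _ (by rw [length_A]; omega)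

lemma A_getD_le (d : Letter) {m m' n : ℕ} (hm : m ≤ m') (h : n < 2 ^ m) :
    (A m').getD n d = (A m).getD n d := by
  induction m' with
  | zero =>
    have : m = 0 := by omega
    subst this; rfl
  | succ m' ih =>
    rcases Nat.lt_or_ge m (m' + 1) with h' | h'
    · have hm' : m ≤ m' := by omega
      rw [A_getD_succ d (by calc n < 2 ^ m := h
                           _ ≤ 2 ^ m' := Nat.pow_le_pow_right (by norm_num) hm')]
      exact ih hm'
    · have : m = m' + 1 := by omega
      subst this; rfl

lemma D_getD {m n : ℕ} (h : n < 2 ^ m) : (A m).getD n .c = D n := by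
  unfold D
  have hn : n < 2 ^ (n + 1) := by
    have := Nat.lt_two_pow_self (n := n)
    have h2 : (2:ℕ) ^ n ≤ 2 ^ (n + 1) := Nat.pow_le_pow_right (by norm_num) (by omega)
    omega
  set M := max m (n + 1) with hM
  have h1 : (A M).getD n .c = (A m).getD n .c := A_getD_le .c (le_max_left _ _) h
  have h2 : (A M).getD n .a = (A (n + 1)).getD n .a := A_getD_le .a (le_max_right _ _) hn
  have hr : n < (A M).length := by
    rw [length_A]
    calc n < 2 ^ m := h
    _ ≤ 2 ^ M := Nat.pow_le_pow_right (by norm_num) (le_max_left _ _)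
  rw [← h1, ← h2, List.getD_eq_getElem _ _ hr, List.getD_eq_getElem _ _ hr]

lemma Dseg_getD {i len t : ℕ} (h : t < len) : (Dseg i len).getD t .c = D (i - 1 + t) := by
  unfold Dseg
  rw [List.getD_eq_getElem _ _ (by simpa using h)]
  simp

/-- Every nonempty factor of D is a factor of some envelope word. -/
lemma exists_env {ω : List Letter} (hfac : FactorD ω) (hne : ω ≠ []) :
    ∃ k, IsFactor ω (Eword k) := by
  obtain ⟨i, hi1, hseg⟩ := hfac
  have hL : 1 ≤ ω.length := List.length_pos_iff.mpr hne
  set L := ω.length with hLdef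
  set p := i - 1 with hp
  set M := p + L with hMdef
  have hpow : M + 1 < 2 ^ (M + 1) := Nat.lt_two_pow_self (n := M + 1)
  refine ⟨2 * M, p + 1, occursAt_iff.mpr ⟨by omega, ?_⟩⟩
  have hEw : Eword (2 * M) = E1 (M + 1) := by
    have h2 : (2 * M) % 2 = 0 := by omega
    have h3 : (2 * M) / 2 = M := by omega
    rw [Eword, if_pos h2, h3]
  have hlenE : (E1 (M + 1)).length = 2 ^ (M + 1) - 1 := by
    rw [E1, List.length_dropLast, length_A]
  simp only [add_tsub_cancel_right]
  rw [hEw]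
  apply occ0_iff.mpr
  refine ⟨by omega, fun t ht => ?_⟩
  have h1 : ω.getD t .c = D (p + t) := by
    conv_lhs => rw [← hseg]
    exact Dseg_getD ht
  have hr : p + t < (E1 (M + 1)).length := by omega
  have hr2 : p + t < (A (M + 1)).length := by rw [length_A]; omega
  rw [h1, List.getD_eq_getElem _ _ hr]
  unfold E1
  refine Eq.trans ?_ (List.getElem_dropLast hr).symm
  rw [← List.getD_eq_getElem (A (M + 1)) .c hr2]
  exact (D_getD (by rw [← length_A (M + 1)]; exact hr2)).symm

lemma eq_b_of_comp_eq_a {x : Letter} (h : comp x = .a) : x = .b := by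
  cases x <;> simp_all [comp]

/-- Core lemma: a nonempty word occurring at two distinct positions in the k-th
envelope word is a factor of an earlier envelope word. -/
lemma core : ∀ k (ω : List Letter), ω ≠ [] → ∀ p q, p ≠ q →
    Occ0 ω (Eword k) p → Occ0 ω (Eword k) q →
    ∃ k' < k, ∃ r, Occ0 ω (Eword k') r := by
  intro k
  induction k using Nat.strong_induction_on with
  | _ k IH =>
  intro ω hne p q hpq h1 h2
  have hL : 1 ≤ ω.length := List.length_pos_iff.mpr hne
  set L := ω.length with hLdef
  rcases k with _ | k
  · -- Eword 0 = [a]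
    exfalso
    have hb1 := h1.1
    have hb2 := h2.1
    rw [Eword_zero] at hb1 hb2
    simp at hb1 hb2
    omega
  rcases k with _ | k
  · -- Eword 1 = [a,a]
    have hb1 := h1.1
    have hb2 := h2.1
    rw [Eword_one] at hb1 hb2
    simp at hb1 hb2
    have hL1 : L = 1 := by omega
    obtain ⟨x, hx⟩ := List.length_eq_one_iff.mp hL1
    have hx1 := (occ0_iff.mp h1).2 0 (by omega)
    rw [hx] at hx1
    simp at hx1
    have hxa : x = .a := by
      rw [hx1, Eword_one]
      rcases (by omega : p = 0 ∨ p = 1) with h | h <;> subst h <;> rfl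
    refine ⟨0, by omega, 0, ?_⟩
    rw [hx, hxa]
    decide
  · -- k + 2
    set w := Eword k with hw
    have hnocw : noc w := noc_Eword k
    have hVw : Eword (k + 2) = Vw w := Eword_succ k
    rw [hVw] at h1 h2
    have hlenW : (Vw w).length = 2 * w.length + 1 := length_Vw hnocw
    obtain ⟨hb1, hp⟩ := occ0_iff.mp h1
    obtain ⟨hb2, hq⟩ := occ0_iff.mp h2
    rw [hlenW] at hb1 hb2
    by_cases hbcase : ∃ t, t < L ∧ ω.getD t .c = .b
    · -- ω contains the letter b: desubstitute
      obtain ⟨t0, ht0, hbt0⟩ := hbcase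
      have hWp : (Vw w).getD (p + t0) .c = .b := by rw [← hp t0 ht0]; exact hbt0
      have hWq : (Vw w).getD (q + t0) .c = .b := by rw [← hq t0 ht0]; exact hbt0
      have hpodd : (p + t0) % 2 = 1 := by
        by_contra h
        exact Vw_even_ne_b hnocw (by omega) hWp
      have hqodd : (q + t0) % 2 = 1 := by
        by_contra h
        exact Vw_even_ne_b hnocw (by omega) hWq
      have hpar : p % 2 = q % 2 := by omega
      set e := p + L - 1 with he
      set p1 := p - p % 2 with hp1
      set q1 := q - q % 2 with hq1
      set n := (e - p1 + 1) / 2 with hn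
      have hn1 : 1 ≤ n := by omega
      have hbound : p1 / 2 + n ≤ w.length := by omega
      have hboundq : q1 / 2 + n ≤ w.length := by omega
      -- segment equality between the two occurrence windows (extended left)
      have hseg : ∀ s ≤ e - p1, (Vw w).getD (p1 + s) .c = (Vw w).getD (q1 + s) .c := by
        intro s hs
        rcases Nat.lt_or_ge s (p % 2) with hcase | hcase
        · have hs0 : s = 0 := by omega
          have hp2 : p % 2 = 1 := by omega
          subst hs0
          have e1 : (Vw w).getD (p1 + 0) .c = .a := by
            have : p1 + 0 = 2 * (p1 / 2) := by omega
            rw [this]; exact Vw_even hnocw _ (by omega)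
          have e2 : (Vw w).getD (q1 + 0) .c = .a := by
            have : q1 + 0 = 2 * (q1 / 2) := by omega
            rw [this]; exact Vw_even hnocw _ (by omega)
          rw [e1, e2]
        · have ht : s - p % 2 < L := by omega
          have e1 := hp (s - p % 2) ht
          have e2 := hq (s - p % 2) ht
          rw [show p1 + s = p + (s - p % 2) by omega, show q1 + s = q + (s - p % 2) by omega,
            ← e1, ← e2]
      -- the desubstituted word u
      set u := (w.drop (p1 / 2)).take n with hu
      have hulen : u.length = n := by
        rw [hu]; simp; omega
      have hunn : u ≠ [] := by
        intro h
        rw [h] at hulen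
        simp at hulen
        omega
      have hoccp : Occ0 u w (p1 / 2) := by
        refine ⟨by omega, ?_⟩
        rw [hulen, hu]
      have huget := (occ0_iff.mp hoccp).2
      rw [hulen] at huget
      have hoccq : Occ0 u w (q1 / 2) := by
        apply occ0_iff.mpr
        rw [hulen]
        refine ⟨by omega, fun t ht => ?_⟩
        rw [huget t ht]
        apply comp_inj
        have e1 := Vw_odd hnocw (p1 / 2 + t) (by omega)
        have e2 := Vw_odd hnocw (q1 / 2 + t) (by omega)
        rw [show 2 * (p1 / 2 + t) + 1 = p1 + (2 * t + 1) by omega] at e1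
        rw [show 2 * (q1 / 2 + t) + 1 = q1 + (2 * t + 1) by omega] at e2
        rw [← e1, ← e2]
        exact hseg (2 * t + 1) (by omega)
      have hpq1 : p1 / 2 ≠ q1 / 2 := by omega
      obtain ⟨k3, hk3, r, hr⟩ := IH k (by omega) u hunn _ _ hpq1 hoccp hoccq
      -- re-substitute: ω occurs in Eword (k3 + 2)
      set w3 := Eword k3 with hw3
      have hnocw3 : noc w3 := noc_Eword k3
      have hVw3 : Eword (k3 + 2) = Vw w3 := Eword_succ k3
      obtain ⟨hb3, hr3⟩ := occ0_iff.mp hr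
      rw [hulen] at hr3
      refine ⟨k3 + 2, by omega, 2 * r + p % 2, ?_⟩
      rw [hVw3]
      apply occ0_iff.mpr
      rw [length_Vw hnocw3]
      refine ⟨by omega, fun t ht => ?_⟩
      rw [hp t ht]
      -- index in the window: s = p % 2 + t
      rcases Nat.even_or_odd (p + t) with hpar2 | hpar2
      · -- even position: both letters are a
        have hev : (p + t) % 2 = 0 := Nat.even_iff.mp hpar2
        have e1 : (Vw w).getD (p + t) .c = .a := by
          rw [show p + t = 2 * ((p + t) / 2) by omega]
          exact Vw_even hnocw _ (by omega)
        have e2 : (Vw w3).getD (2 * r + p % 2 + t) .c = .a := by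
          rw [show 2 * r + p % 2 + t = 2 * (r + (p % 2 + t) / 2) by omega]
          exact Vw_even hnocw3 _ (by omega)
        rw [e1, e2]
      · -- odd position: letters come from u
        have hod : (p + t) % 2 = 1 := Nat.odd_iff.mp hpar2
        set t' := (p % 2 + t) / 2 with ht'
        have ht'n : t' < n := by omega
        have e1 := Vw_odd hnocw (p1 / 2 + t') (by omega)
        have e2 := Vw_odd hnocw3 (r + t') (by omega)
        rw [show 2 * (p1 / 2 + t') + 1 = p + t by omega] at e1
        rw [show 2 * (r + t') + 1 = 2 * r + p % 2 + t by omega] at e2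
        rw [e1, e2, ← huget t' ht'n, ← hr3 t' ht'n]
    · -- ω consists only of the letter a
      push_neg at hbcase
      have hnocW : noc (Vw w) := noc_Vw hnocw
      have hall : ∀ t < L, ω.getD t .c = .a := by
        intro t ht
        have hval := hp t ht
        have hrange : p + t < (Vw w).length := by omega
        have hmem : (Vw w).getD (p + t) .c ∈ Vw w := by
          rw [List.getD_eq_getElem _ _ hrange]
          exact List.getElem_mem _
        have hnc : (Vw w).getD (p + t) .c ≠ .c := hnocW _ hmem
        have hnb : ω.getD t .c ≠ .b := hbcase t ht
        rw [hval] at hnb ⊢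
        cases hx : (Vw w).getD (p + t) .c
        · rfl
        · exact absurd hx hnb
        · exact absurd hx hnc
      -- bound on run length: L ≤ 3
      have hL3 : L ≤ 3 := by
        by_contra hL4
        push_neg at hL4
        -- pick odd index o among p, p+1
        set o := p + 1 - p % 2 with ho
        have hoodd : o % 2 = 1 := by omega
        set t' := o / 2 with ht'
        have hwb : w.getD t' .c = .b := by
          have e1 := Vw_odd hnocw t' (by omega)
          rw [show 2 * t' + 1 = o by omega] at e1
          have e2 : (Vw w).getD o .c = .a := by
            have := hall (o - p) (by omega)
            rw [hp (o - p) (by omega)] at this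
            rw [show p + (o - p) = o by omega] at this
            exact this
          rw [e2] at e1
          exact eq_b_of_comp_eq_a e1.symm
        have hwb2 : w.getD (t' + 1) .c = .b := by
          have e1 := Vw_odd hnocw (t' + 1) (by omega)
          rw [show 2 * (t' + 1) + 1 = o + 2 by omega] at e1
          have e2 : (Vw w).getD (o + 2) .c = .a := by
            have := hall (o + 2 - p) (by omega)
            rw [hp (o + 2 - p) (by omega)] at this
            rw [show p + (o + 2 - p) = o + 2 by omega] at this
            exact this
          rw [e2] at e1
          exact eq_b_of_comp_eq_a e1.symm
        -- one of t', t'+1 is even: contradiction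
        rcases Nat.even_or_odd t' with hev | hod
        · exact Eword_even_ne_b k (Nat.even_iff.mp hev) hwb
        · have : (t' + 1) % 2 = 0 := by
            have := Nat.odd_iff.mp hod; omega
          exact Eword_even_ne_b k this hwb2
      -- ω is a replicate of a
      have hω : ω = List.replicate L .a := by
        apply List.ext_getElem (by simp [hLdef])
        intro i hi1 hi2
        have := hall i (by omega)
        rw [List.getD_eq_getElem _ _ hi1] at this
        simp [this]
      have hcases : L = 1 ∨ L = 2 ∨ L = 3 := by omega
      rw [hω] at h1 h2 ⊢
      rw [← hVw] at h1 h2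
      rcases hcases with hLv | hLv | hLv
      · rw [hLv] at h1 h2 ⊢
        exact ⟨0, by omega, 0, by decide⟩
      · rw [hLv] at h1 h2 ⊢
        exact ⟨1, by omega, 0, by decide⟩
      · -- L = 3
        rw [hLv] at h1 h2 ⊢
        rw [show List.replicate 3 Letter.a = [Letter.a, .a, .a] from rfl] at h1 h2 ⊢
        rcases Nat.lt_or_ge (k + 2) 5 with hk5 | hk5
        · exfalso
          have hdec : ∀ kk < 5, ∀ p' < 5, ∀ q' < 5, p' ≠ q' →
              ¬(Occ0 [Letter.a, .a, .a] (Eword kk) p' ∧ Occ0 [Letter.a, .a, .a] (Eword kk) q') := by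
            decide
          have hlen7 : (Eword (k + 2)).length < 8 := by
            have hk' : k < 3 := by omega
            interval_cases k <;> decide
          have hb1' := h1.1
          have hb2' := h2.1
          simp at hb1' hb2'
          exact hdec (k + 2) hk5 p (by omega) q (by omega) hpq ⟨h1, h2⟩
        · exact ⟨4, by omega, 2, by decide⟩

/-- Every (nonempty) factor ω of the period-doubling sequence D occurs
exactly once in its envelope Env(ω). -/
theorem factor_occurs_once_in_envelope (ω : List Letter) (hfac : FactorD ω)
    (hne : ω ≠ []) :
    ∃! i, OccursAt ω (Env ω) i := by
  have hSne : {k | IsFactor ω (Eword k)}.Nonempty := exists_env hfac hne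
  have hmem : sInf {k | IsFactor ω (Eword k)} ∈ {k | IsFactor ω (Eword k)} :=
    Nat.sInf_mem hSne
  have hEnv : Env ω = Eword (sInf {k | IsFactor ω (Eword k)}) := rfl
  obtain ⟨i0, hi0⟩ := hmem
  have hi0' := occursAt_iff.mp hi0
  refine ⟨i0, by rw [hEnv]; exact hi0, ?_⟩
  intro y hy
  rw [hEnv] at hy
  by_contra hne2
  have hy' := occursAt_iff.mp hy
  have hd : y - 1 ≠ i0 - 1 := by omega
  obtain ⟨k', hk', r, hr⟩ := core _ ω hne _ _ hd hy'.2 hi0'.2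
  have hmem' : k' ∈ {k | IsFactor ω (Eword k)} :=
    ⟨r + 1, occursAt_iff.mpr ⟨by omega, by simpa using hr⟩⟩
  have := Nat.sInf_le hmem'
  omega
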